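/- Let α > β > 2, a, b > 0, f(r) = a r^{-α} - b r^{-β}, and let L be a two-dimensional lattice of co-volume 1. Then the function V ↦ E_f[√V·L] on (0, ∞) has a unique minimizer, namely V_L = (a α ζ_L(α) / (b β ζ_L(β)))^{2/(α-β)}; i.e., for all V > 0 with V ≠ V_L, E_f[√V·L] > E_f[√(V_L)·L]. -/

import Mathlib

open scoped Pointwise

noncomputable section

/-- A point of the Euclidean plane with coordinates `a`, `b`. -/
def vec2 (a b : ℝ) : EuclideanSpace ℝ (Fin 2) := (WithLp.equiv 2 (Fin 2 → ℝ)).symm ![a, b]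

/-- The lattice (as a set of points) generated by `u` and `v`. -/
def latticeSet (u v : EuclideanSpace ℝ (Fin 2)) : Set (EuclideanSpace ℝ (Fin 2)) :=
  {p | ∃ m n : ℤ, p = (m : ℝ) • u + (n : ℝ) • v}

/-- The determinant of the pair of plane vectors `(u, v)`. -/
def det2 (u v : EuclideanSpace ℝ (Fin 2)) : ℝ := u 0 * v 1 - u 1 * v 0

/-- `L` is a two-dimensional lattice, i.e. `L = ℤu ⊕ ℤv` for a basis `(u,v)` of ℝ². -/
def IsLattice2 (L : Set (EuclideanSpace ℝ (Fin 2))) : Prop :=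
  ∃ u v : EuclideanSpace ℝ (Fin 2), det2 u v ≠ 0 ∧ L = latticeSet u v

/-- `L` is a two-dimensional lattice of co-volume `V = |det(u,v)|`. -/
def IsLattice2OfCovol (L : Set (EuclideanSpace ℝ (Fin 2))) (V : ℝ) : Prop :=
  ∃ u v : EuclideanSpace ℝ (Fin 2), det2 u v ≠ 0 ∧ |det2 u v| = V ∧ L = latticeSet u v

/-- The Epstein zeta function of a set of points: `ζ_L(s) = Σ'_{p ∈ L, p ≠ 0} |p|^{-s}`. -/
def epsteinZeta (L : Set (EuclideanSpace ℝ (Fin 2))) (s : ℝ) : ℝ :=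
  ∑' p : ↥(L \ {0}), ‖(p : EuclideanSpace ℝ (Fin 2))‖ ^ (-s)

/-- The Lennard-Jones type energy `E_f[L] = Σ'_{p ∈ L, p ≠ 0} (a|p|^{-α} - b|p|^{-β})`. -/
def LJenergy (a b α β : ℝ) (L : Set (EuclideanSpace ℝ (Fin 2))) : ℝ :=
  ∑' p : ↥(L \ {0}),
    (a * ‖(p : EuclideanSpace ℝ (Fin 2))‖ ^ (-α) - b * ‖(p : EuclideanSpace ℝ (Fin 2))‖ ^ (-β))

/-- The triangular lattice `A₂ = √(2/√3)·[ℤ(1,0) ⊕ ℤ(1/2,√3/2)]`, of co-volume 1. -/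
def triangularLattice : Set (EuclideanSpace ℝ (Fin 2)) :=
  latticeSet (Real.sqrt (2 / Real.sqrt 3) • vec2 1 0)
    (Real.sqrt (2 / Real.sqrt 3) • vec2 (1 / 2) (Real.sqrt 3 / 2))

/-- The square lattice `ℤ² = ℤ(1,0) ⊕ ℤ(0,1)`. -/
def squareLattice : Set (EuclideanSpace ℝ (Fin 2)) := latticeSet (vec2 1 0) (vec2 0 1)

/-- `L` is the image of `L'` under an orthogonal transformation of ℝ². -/
def IsRotationOf (L L' : Set (EuclideanSpace ℝ (Fin 2))) : Prop :=
  ∃ O : EuclideanSpace ℝ (Fin 2) ≃ₗᵢ[ℝ] EuclideanSpace ℝ (Fin 2), L = O '' L'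

/-- The unit co-volume lattice parametrized by `(x, y)` in the half-fundamental domain:
`ℤu ⊕ ℤv` with `u = (1/√y, 0)` and `v = (x/√y, √y)`. -/
def latticeXY (x y : ℝ) : Set (EuclideanSpace ℝ (Fin 2)) :=
  latticeSet (vec2 (1 / Real.sqrt y) 0) (vec2 (x / Real.sqrt y) (Real.sqrt y))

/-- The Riemann zeta function `ζ(s) = Σ_{m ≥ 1} m^{-s}` (real variable version). -/
def riemannZetaReal (s : ℝ) : ℝ := ∑' n : ℕ+, (n : ℝ) ^ (-s)

end


noncomputable section

/-- The linear map `(x₀, x₁) ↦ x₀ u + x₁ v`. -/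
def latMap (u v : EuclideanSpace ℝ (Fin 2)) : (Fin 2 → ℝ) →ₗ[ℝ] EuclideanSpace ℝ (Fin 2) where
  toFun x := x 0 • u + x 1 • v
  map_add' x y := by
    show (x 0 + y 0) • u + (x 1 + y 1) • v = _
    module
  map_smul' c x := by
    show (c * x 0) • u + (c * x 1) • v = _
    simp only [RingHom.id_apply]
    module

lemma latMap_injective {u v : EuclideanSpace ℝ (Fin 2)} (h : det2 u v ≠ 0) :
    Function.Injective (latMap u v) := by
  rw [← LinearMap.ker_eq_bot, LinearMap.ker_eq_bot']
  intro x hx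
  have h0 : (latMap u v x) 0 = 0 := by rw [hx]; rfl
  have h1 : (latMap u v x) 1 = 0 := by rw [hx]; rfl
  simp only [latMap, LinearMap.coe_mk, AddHom.coe_mk, PiLp.add_apply, PiLp.smul_apply,
    smul_eq_mul] at h0 h1
  have hx0 : x 0 * det2 u v = 0 := by unfold det2; linear_combination v 1 * h0 - v 0 * h1
  have hx1 : x 1 * det2 u v = 0 := by unfold det2; linear_combination u 0 * h1 - u 1 * h0
  have e0 : x 0 = 0 := by rcases mul_eq_zero.mp hx0 with h' | h'; exact h'; exact absurd h' h
  have e1 : x 1 = 0 := by rcases mul_eq_zero.mp hx1 with h' | h'; exact h'; exact absurd h' h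
  funext i
  fin_cases i <;> simpa [e0, e1]

def icast (x : Fin 2 → ℤ) : Fin 2 → ℝ := fun i => (x i : ℝ)

lemma norm_icast (x : Fin 2 → ℤ) : ‖icast x‖ = ‖x‖ := by
  rw [Pi.norm_def, Pi.norm_def]
  congr 1

lemma icast_injective : Function.Injective icast := by
  intro x y h
  funext i
  have := congrFun h i
  simpa [icast] using this

lemma icast_eq_zero {x : Fin 2 → ℤ} : icast x = 0 ↔ x = 0 := by
  constructor
  · intro h
    funext i
    have := congrFun h i
    simpa [icast] using this
  · rintro rfl
    funext i
    simp [icast]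

/-- The bijection between nonzero integer vectors and nonzero lattice points. -/
def latEquiv {u v : EuclideanSpace ℝ (Fin 2)} (h : det2 u v ≠ 0) :
    {x : Fin 2 → ℤ // x ≠ 0} ≃ ↥(latticeSet u v \ {0}) := by
  refine Equiv.ofBijective
    (fun x => ⟨latMap u v (icast x.1), ⟨⟨x.1 0, x.1 1, rfl⟩, ?_⟩⟩) ⟨?_, ?_⟩
  · intro h0
    apply x.2
    have h1 : latMap u v (icast x.1) = latMap u v 0 := by
      rw [map_zero]; simpa using (Set.mem_singleton_iff.mp h0)
    exact icast_eq_zero.mp (latMap_injective h h1)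
  · intro x y hxy
    have := latMap_injective h (Subtype.ext_iff.mp hxy)
    exact Subtype.ext (icast_injective this)
  · rintro ⟨p, ⟨m, n, rfl⟩, hp0⟩
    refine ⟨⟨![m, n], ?_⟩, ?_⟩
    · intro h0
      apply hp0
      have hm : m = 0 := by simpa using congrFun h0 0
      have hn : n = 0 := by simpa using congrFun h0 1
      subst hm; subst hn
      simp [Set.mem_singleton_iff]
    · apply Subtype.ext
      show latMap u v (icast ![m, n]) = _
      simp [latMap, icast]

lemma latMap_eq_norm (u v : EuclideanSpace ℝ (Fin 2)) (x : {x : Fin 2 → ℤ // x ≠ 0})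
    (h : det2 u v ≠ 0) :
    ‖((latEquiv h x : EuclideanSpace ℝ (Fin 2)))‖ = ‖latMap u v (icast x.1)‖ := rfl

/-- Summability of `‖p‖^{-s}` over nonzero lattice points, `s > 2`. -/
lemma summable_lattice {u v : EuclideanSpace ℝ (Fin 2)} (h : det2 u v ≠ 0) {s : ℝ}
    (hs : 2 < s) :
    Summable (fun p : ↥(latticeSet u v \ {0}) => ‖(p : EuclideanSpace ℝ (Fin 2))‖ ^ (-s)) := by
  rw [← (latEquiv h).summable_iff]
  obtain ⟨K, hK, hanti⟩ := (latMap u v).injective_iff_antilipschitz.mp (latMap_injective h)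
  have hbound : ∀ x : {x : Fin 2 → ℤ // x ≠ 0},
      ‖latMap u v (icast x.1)‖ ^ (-s) ≤ (K : ℝ) ^ s * ‖x.1‖ ^ (-s) := by
    intro x
    have hxne : icast x.1 ≠ 0 := fun h0 => x.2 (icast_eq_zero.mp h0)
    have hxpos : 0 < ‖icast x.1‖ := norm_pos_iff.mpr hxne
    have hle : ‖icast x.1‖ ≤ K * ‖latMap u v (icast x.1)‖ :=
      hanti.le_mul_norm (latMap u v).map_zero (icast x.1)
    have hKpos : (0 : ℝ) < K := hK
    have hlatpos : 0 < ‖latMap u v (icast x.1)‖ := by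
      by_contra hc
      push_neg at hc
      have : ‖latMap u v (icast x.1)‖ = 0 := le_antisymm hc (norm_nonneg _)
      rw [this, mul_zero] at hle
      linarith
    have h2 : (K : ℝ)⁻¹ * ‖icast x.1‖ ≤ ‖latMap u v (icast x.1)‖ := by
      rw [inv_mul_le_iff₀ hKpos]
      linarith [hle]
    calc ‖latMap u v (icast x.1)‖ ^ (-s)
        ≤ ((K : ℝ)⁻¹ * ‖icast x.1‖) ^ (-s) :=
          Real.rpow_le_rpow_of_nonpos (mul_pos (inv_pos.mpr hKpos) hxpos) h2 (by linarith)
      _ = (K : ℝ) ^ s * ‖x.1‖ ^ (-s) := by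
          rw [Real.mul_rpow (inv_nonneg.mpr hKpos.le) hxpos.le, norm_icast,
            Real.inv_rpow hKpos.le, Real.rpow_neg hKpos.le, inv_inv]
  refine Summable.of_nonneg_of_le (fun x => Real.rpow_nonneg (norm_nonneg _) _) hbound ?_
  exact (((EisensteinSeries.summable_one_div_norm_rpow hs).mul_left ((K : ℝ) ^ s)).subtype _).congr
    (fun x => rfl)

lemma epstein_pos {u v : EuclideanSpace ℝ (Fin 2)} (h : det2 u v ≠ 0) {s : ℝ} (hs : 2 < s) :
    0 < epsteinZeta (latticeSet u v) s := by
  have hu : u ∈ latticeSet u v := ⟨1, 0, by simp⟩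
  have hu0 : u ≠ 0 := by
    intro h0
    apply h
    simp [det2, h0]
  refine Summable.tsum_pos (summable_lattice h hs) (fun p => Real.rpow_nonneg (norm_nonneg _) _)
    ⟨u, hu, hu0⟩ ?_
  exact Real.rpow_pos_of_pos (norm_pos_iff.mpr hu0) _

/-- Scaling bijection on nonzero points. -/
def smulEquiv {c : ℝ} (hc : c ≠ 0) (L : Set (EuclideanSpace ℝ (Fin 2))) :
    ↥(L \ {0}) ≃ ↥((c • L) \ {0}) where
  toFun p := ⟨c • (p : EuclideanSpace ℝ (Fin 2)),
    ⟨Set.smul_mem_smul_set p.2.1, fun h0 => by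
      rcases smul_eq_zero.mp (Set.mem_singleton_iff.mp h0) with h' | h'
      · exact hc h'
      · exact p.2.2 h'⟩⟩
  invFun p := ⟨c⁻¹ • (p : EuclideanSpace ℝ (Fin 2)),
    ⟨by
      obtain ⟨q, hq, hcq⟩ := Set.mem_smul_set.mp p.2.1
      rw [← hcq, inv_smul_smul₀ hc]
      exact hq,
     fun h0 => by
      rcases smul_eq_zero.mp (Set.mem_singleton_iff.mp h0) with h' | h'
      · exact hc (inv_eq_zero.mp h')
      · exact p.2.2 h'⟩⟩
  left_inv p := Subtype.ext (inv_smul_smul₀ hc _)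
  right_inv p := Subtype.ext (smul_inv_smul₀ hc _)

lemma epstein_smul {c : ℝ} (hc : 0 < c) (L : Set (EuclideanSpace ℝ (Fin 2))) (s : ℝ) :
    epsteinZeta (c • L) s = c ^ (-s) * epsteinZeta L s := by
  unfold epsteinZeta
  rw [← (smulEquiv hc.ne' L).tsum_eq, ← tsum_mul_left]
  refine tsum_congr fun p => ?_
  have hnp : ‖((smulEquiv hc.ne' L p : ↥((c • L) \ {0})) : EuclideanSpace ℝ (Fin 2))‖
      = c * ‖(p : EuclideanSpace ℝ (Fin 2))‖ := by
    show ‖c • (p : EuclideanSpace ℝ (Fin 2))‖ = _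
    rw [norm_smul, Real.norm_eq_abs, abs_of_pos hc]
  rw [hnp, Real.mul_rpow hc.le (norm_nonneg _)]

lemma LJ_smul {u v : EuclideanSpace ℝ (Fin 2)} (h : det2 u v ≠ 0) {α β a b : ℝ}
    (hβ : 2 < β) (hαβ : β < α) {c : ℝ} (hc : 0 < c) :
    LJenergy a b α β (c • latticeSet u v) =
      a * c ^ (-α) * epsteinZeta (latticeSet u v) α
        - b * c ^ (-β) * epsteinZeta (latticeSet u v) β := by
  set L := latticeSet u v with hLdef
  have hSα := summable_lattice h (hβ.trans hαβ)
  have hSβ := summable_lattice h hβ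
  unfold LJenergy epsteinZeta
  rw [← (smulEquiv hc.ne' L).tsum_eq]
  have step : ∀ p : ↥(L \ {0}),
      (a * ‖((smulEquiv hc.ne' L p : ↥((c • L) \ {0})) : EuclideanSpace ℝ (Fin 2))‖ ^ (-α)
        - b * ‖((smulEquiv hc.ne' L p : ↥((c • L) \ {0})) : EuclideanSpace ℝ (Fin 2))‖ ^ (-β))
      = (a * c ^ (-α)) * ‖(p : EuclideanSpace ℝ (Fin 2))‖ ^ (-α)
        - (b * c ^ (-β)) * ‖(p : EuclideanSpace ℝ (Fin 2))‖ ^ (-β) := by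
    intro p
    have hnp : ‖((smulEquiv hc.ne' L p : ↥((c • L) \ {0})) : EuclideanSpace ℝ (Fin 2))‖
        = c * ‖(p : EuclideanSpace ℝ (Fin 2))‖ := by
      show ‖c • (p : EuclideanSpace ℝ (Fin 2))‖ = _
      rw [norm_smul, Real.norm_eq_abs, abs_of_pos hc]
    rw [hnp, Real.mul_rpow hc.le (norm_nonneg _), Real.mul_rpow hc.le (norm_nonneg _)]
    ring
  rw [tsum_congr step, Summable.tsum_sub (hSα.mul_left _) (hSβ.mul_left _), tsum_mul_left, tsum_mul_left]

end

open Real in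
lemma lj_hasDeriv (A B p q : ℝ) {x : ℝ} (hx : 0 < x) :
    HasDerivAt (fun V => A * V ^ (-p) - B * V ^ (-q))
      (A * (-p * x ^ (-p - 1)) - B * (-q * x ^ (-q - 1))) x := by
  have h1 := (Real.hasDerivAt_rpow_const (x := x) (p := -p) (Or.inl hx.ne')).const_mul A
  have h2 := (Real.hasDerivAt_rpow_const (x := x) (p := -q) (Or.inl hx.ne')).const_mul B
  have h3 := h1.sub h2
  exact h3

open Real in
lemma scalar_min (A B p q : ℝ) (hB : 0 < B) (hq : 1 < q) (hpq : q < p)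
    {W : ℝ} (hW : 0 < W) (hWkey : W ^ (p - q) = A * p / (B * q)) :
    ∀ V, 0 < V → V ≠ W → A * W ^ (-p) - B * W ^ (-q) < A * V ^ (-p) - B * V ^ (-q) := by
  intro V hV hVW
  set g : ℝ → ℝ := fun V => A * V ^ (-p) - B * V ^ (-q) with hg
  have hp : 0 < p := by linarith
  have hq0 : 0 < q := by linarith
  have hpq0 : 0 < p - q := by linarith
  have hderiv : ∀ x : ℝ, 0 < x →
      deriv g x = A * (-p * x ^ (-p - 1)) - B * (-q * x ^ (-q - 1)) := fun x hx =>
    (lj_hasDeriv A B p q hx).deriv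
  have hfact : ∀ x : ℝ, 0 < x →
      deriv g x = x ^ (-q - 1) * (B * q - A * p * x ^ (-(p - q))) := by
    intro x hx
    rw [hderiv x hx]
    have hxpq : x ^ (-p - 1) = x ^ (-(p - q)) * x ^ (-q - 1) := by
      rw [← Real.rpow_add hx]; ring_nf
    rw [hxpq]; ring
  have hsign : ∀ x : ℝ, 0 < x → (x < W → deriv g x < 0) ∧ (W < x → 0 < deriv g x) := by
    intro x hx
    have hx1 : (0:ℝ) < x ^ (-q - 1) := Real.rpow_pos_of_pos hx _
    have hx2 : (0:ℝ) < x ^ (p - q) := Real.rpow_pos_of_pos hx _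
    have hinv : x ^ (-(p - q)) = (x ^ (p - q))⁻¹ := Real.rpow_neg hx.le _
    constructor
    · intro hxW
      have h1 : x ^ (p - q) < A * p / (B * q) := hWkey ▸ Real.rpow_lt_rpow hx.le hxW hpq0
      have h2 : B * q * x ^ (p - q) < A * p := by
        rw [lt_div_iff₀ (by positivity)] at h1; linarith
      have h3 : B * q < A * p * x ^ (-(p - q)) := by
        rw [hinv, lt_mul_inv_iff₀ hx2]; linarith
      rw [hfact x hx]
      have : B * q - A * p * x ^ (-(p - q)) < 0 := by linarith
      exact mul_neg_of_pos_of_neg hx1 this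
    · intro hWx
      have h1 : A * p / (B * q) < x ^ (p - q) := hWkey ▸ Real.rpow_lt_rpow hW.le hWx hpq0
      have h2 : A * p < B * q * x ^ (p - q) := by
        rw [div_lt_iff₀ (by positivity)] at h1; linarith
      have h3 : A * p * x ^ (-(p - q)) < B * q := by
        rw [hinv, mul_inv_lt_iff₀ hx2]; linarith
      rw [hfact x hx]
      have : 0 < B * q - A * p * x ^ (-(p - q)) := by linarith
      exact mul_pos hx1 this
  have hcont : ∀ s : Set ℝ, (∀ x ∈ s, 0 < x) → ContinuousOn g s := by
    intro s hs x hx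
    exact ((lj_hasDeriv A B p q (hs x hx)).continuousAt).continuousWithinAt
  rcases lt_or_gt_of_ne hVW with hlt | hgt
  · have hanti : StrictAntiOn g (Set.Icc V W) := by
      refine strictAntiOn_of_deriv_neg (convex_Icc V W)
        (hcont _ (fun x hx => lt_of_lt_of_le hV hx.1)) ?_
      intro x hx
      rw [interior_Icc] at hx
      exact (hsign x (hV.trans hx.1)).1 hx.2
    exact hanti (Set.left_mem_Icc.2 hlt.le) (Set.right_mem_Icc.2 hlt.le) hlt
  · have hmono : StrictMonoOn g (Set.Icc W V) := by
      refine strictMonoOn_of_deriv_pos (convex_Icc W V)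
        (hcont _ (fun x hx => lt_of_lt_of_le hW hx.1)) ?_
      intro x hx
      rw [interior_Icc] at hx
      exact (hsign x (hW.trans hx.1)).2 hx.1
    exact hmono (Set.left_mem_Icc.2 hgt.le) (Set.right_mem_Icc.2 hgt.le) hgt

/-- For a unit co-volume lattice `L`, the function `V ↦ E_f[√V·L]` on `(0,∞)` has the
unique minimizer `V_L = (aαζ_L(α)/(bβζ_L(β)))^{2/(α-β)}`. -/
theorem unique_optimal_dilation
    (α β a b : ℝ) (hβ : 2 < β) (hαβ : β < α) (ha : 0 < a) (hb : 0 < b)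
    (L : Set (EuclideanSpace ℝ (Fin 2))) (hL : IsLattice2OfCovol L 1) (VL : ℝ)
    (hVL : VL = (a * α * epsteinZeta L α / (b * β * epsteinZeta L β)) ^ (2 / (α - β))) :
    ∀ V : ℝ, 0 < V → V ≠ VL →
      LJenergy a b α β (Real.sqrt VL • L) < LJenergy a b α β (Real.sqrt V • L) := by
  obtain ⟨u, v, hdet, -, rfl⟩ := hL
  set ζα := epsteinZeta (latticeSet u v) α with hζαdef
  set ζβ := epsteinZeta (latticeSet u v) β with hζβdef
  have hα2 : 2 < α := hβ.trans hαβ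
  have hζα : 0 < ζα := epstein_pos hdet hα2
  have hζβ : 0 < ζβ := epstein_pos hdet hβ
  have hbase : 0 < a * α * ζα / (b * β * ζβ) := by positivity
  have hVL0 : 0 < VL := hVL ▸ Real.rpow_pos_of_pos hbase _
  have hαβne : α - β ≠ 0 := by linarith
  -- the key identity for VL
  have hWkey : VL ^ (α / 2 - β / 2) = (a * ζα) * (α / 2) / ((b * ζβ) * (β / 2)) := by
    have h1 : α / 2 - β / 2 = (α - β) / 2 := by ring
    rw [h1, hVL, ← Real.rpow_mul hbase.le]
    have h2 : 2 / (α - β) * ((α - β) / 2) = 1 := by field_simp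
    rw [h2, Real.rpow_one]
    rw [div_eq_div_iff (by positivity) (by positivity)]
    ring
  -- evaluation of the energy of the dilated lattice
  have sqrt_rpow : ∀ V : ℝ, 0 < V → ∀ s : ℝ, (Real.sqrt V) ^ (-s) = V ^ (-(s / 2)) := by
    intro V hV s
    rw [Real.sqrt_eq_rpow, ← Real.rpow_mul hV.le]
    congr 1
    ring
  have hE : ∀ V : ℝ, 0 < V → LJenergy a b α β (Real.sqrt V • latticeSet u v) =
      (a * ζα) * V ^ (-(α / 2)) - (b * ζβ) * V ^ (-(β / 2)) := by
    intro V hV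
    have hc : 0 < Real.sqrt V := Real.sqrt_pos.mpr hV
    rw [LJ_smul hdet hβ hαβ hc, sqrt_rpow V hV α, sqrt_rpow V hV β]
    ring
  intro V hV hVne
  rw [hE VL hVL0, hE V hV]
  exact scalar_min (a * ζα) (b * ζβ) (α / 2) (β / 2) (by positivity)
    (by linarith) (by linarith) hVL0 hWkey V hV hVne
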